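/- Let N ≥ 2 and let γ : Fin (N−1) → ℝ be arbitrary. Let H_0 be the XX chain Hamiltonian of length N with couplings γ, and let S = ⊗_{j=1}^N P_j be the Pauli word with P_j = X for odd j and P_j = Y for even j. Then S is an internal symmetry of the controlled system with controls Z_1 and X_2: H_0ᵀ·S + S·H_0 = 0, Z_1ᵀ·S + S·Z_1 = 0, and X_2ᵀ·S + S·X_2 = 0 (where Mᵀ denotes the transpose). -/

import Mathlib

open Matrix Complex Finset

/-- The Pauli X matrix. -/
noncomputable def PauliX : Matrix (Fin 2) (Fin 2) ℂ := !![0, 1; 1, 0]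
/-- The Pauli Y matrix. -/
noncomputable def PauliY : Matrix (Fin 2) (Fin 2) ℂ := !![0, -Complex.I; Complex.I, 0]
/-- The Pauli Z matrix. -/
noncomputable def PauliZ : Matrix (Fin 2) (Fin 2) ℂ := !![1, 0; 0, -1]

/-- Tensor product of `N` single-qubit matrices: the entry at `(x, y)` is `∏ j, (P j) (x j) (y j)`. -/
noncomputable def kronN {N : ℕ} (P : Fin N → Matrix (Fin 2) (Fin 2) ℂ) :
    Matrix (Fin N → Fin 2) (Fin N → Fin 2) ℂ :=
  Matrix.of fun x y => ∏ j, P j (x j) (y j)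

/-- The single-qubit operator `R` acting on site `k`, identity elsewhere. -/
noncomputable def localOp {N : ℕ} (k : Fin N) (R : Matrix (Fin 2) (Fin 2) ℂ) :
    Matrix (Fin N → Fin 2) (Fin N → Fin 2) ℂ :=
  kronN (fun m => if m = k then R else 1)

/-- The two-site operator with `R` at site `j`, `R'` at site `k`, identity elsewhere. -/
noncomputable def twoOp {N : ℕ} (j k : Fin N) (R R' : Matrix (Fin 2) (Fin 2) ℂ) :
    Matrix (Fin N → Fin 2) (Fin N → Fin 2) ℂ :=
  kronN (fun m => if m = j then R else if m = k then R' else 1)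

/-- Left site of the `j`-th bond of a chain of length `N`. -/
def siteL {N : ℕ} (j : Fin (N - 1)) : Fin N := ⟨j.val, by have := j.isLt; omega⟩
/-- Right site of the `j`-th bond of a chain of length `N`. -/
def siteR {N : ℕ} (j : Fin (N - 1)) : Fin N := ⟨j.val + 1, by have := j.isLt; omega⟩

/-- The XYZ chain Hamiltonian of length `N` with couplings `a b c : Fin (N-1) → ℝ`:
`H₀ = Σ_j (a_j X_j X_{j+1} + b_j Y_j Y_{j+1} + c_j Z_j Z_{j+1})`. -/
noncomputable def xyzChain (N : ℕ) (a b c : Fin (N - 1) → ℝ) :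
    Matrix (Fin N → Fin 2) (Fin N → Fin 2) ℂ :=
  ∑ j : Fin (N - 1),
    ((a j : ℂ) • twoOp (siteL j) (siteR j) PauliX PauliX +
     (b j : ℂ) • twoOp (siteL j) (siteR j) PauliY PauliY +
     (c j : ℂ) • twoOp (siteL j) (siteR j) PauliZ PauliZ)

/-- The XX chain Hamiltonian of length `N` with couplings `γ : Fin (N-1) → ℝ`:
`H₀ = Σ_j γ_j (X_j X_{j+1} + Y_j Y_{j+1})`. -/
noncomputable def xxChain (N : ℕ) (γ : Fin (N - 1) → ℝ) :
    Matrix (Fin N → Fin 2) (Fin N → Fin 2) ℂ :=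
  ∑ j : Fin (N - 1),
    (γ j : ℂ) • (twoOp (siteL j) (siteR j) PauliX PauliX +
                 twoOp (siteL j) (siteR j) PauliY PauliY)

lemma kronN_transpose {N : ℕ} (P : Fin N → Matrix (Fin 2) (Fin 2) ℂ) :
    (kronN P)ᵀ = kronN (fun j => (P j)ᵀ) := by
  ext x y; simp [kronN, Matrix.transpose_apply]

lemma kronN_mul {N : ℕ} (P Q : Fin N → Matrix (Fin 2) (Fin 2) ℂ) :
    kronN P * kronN Q = kronN (fun j => P j * Q j) := by
  ext x y
  simp only [kronN, Matrix.mul_apply, Matrix.of_apply]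
  rw [Finset.prod_univ_sum]
  simp [Fintype.piFinset_univ, Finset.prod_mul_distrib]

lemma kron_anti {N : ℕ} (T S : Fin N → Matrix (Fin 2) (Fin 2) ℂ) (k : Fin N)
    (hk : (T k)ᵀ * S k = -(S k * T k))
    (hc : ∀ m, m ≠ k → (T m)ᵀ * S m = S m * T m) :
    (kronN T)ᵀ * kronN S + kronN S * kronN T = 0 := by
  rw [kronN_transpose, kronN_mul, kronN_mul]
  ext x y
  simp only [kronN, Matrix.add_apply, Matrix.of_apply, Matrix.zero_apply]
  rw [← Finset.mul_prod_erase _ _ (Finset.mem_univ k),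
      ← Finset.mul_prod_erase _ (fun j => (S j * T j) (x j) (y j)) (Finset.mem_univ k), hk]
  have h2 : ∏ m ∈ univ.erase k, ((T m)ᵀ * S m) (x m) (y m)
      = ∏ m ∈ univ.erase k, ((S m) * (T m)) (x m) (y m) :=
    Finset.prod_congr rfl (fun m hm => by rw [hc m (Finset.mem_erase.mp hm).1])
  rw [h2]
  simp [Matrix.neg_apply]

lemma hXt : PauliXᵀ = PauliX := by
  ext i j; fin_cases i <;> fin_cases j <;> simp [PauliX, Matrix.transpose_apply]
lemma hZt : PauliZᵀ = PauliZ := by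
  ext i j; fin_cases i <;> fin_cases j <;> simp [PauliZ, Matrix.transpose_apply]
lemma hYt : PauliYᵀ = -PauliY := by
  ext i j; fin_cases i <;> fin_cases j <;> simp [PauliY, Matrix.transpose_apply]
lemma hXY : PauliX * PauliY = -(PauliY * PauliX) := by
  ext i j; fin_cases i <;> fin_cases j <;>
    simp [PauliX, PauliY, Matrix.mul_apply, Fin.sum_univ_two]
lemma hZXc : PauliZ * PauliX = -(PauliX * PauliZ) := by
  ext i j; fin_cases i <;> fin_cases j <;>
    simp [PauliX, PauliZ, Matrix.mul_apply, Fin.sum_univ_two]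
lemma hZX : PauliZᵀ * PauliX = -(PauliX * PauliZ) := by rw [hZt, hZXc]
lemma hYtY : PauliYᵀ * PauliY = -(PauliY * PauliY) := by rw [hYt, neg_mul]
lemma hYtX : PauliYᵀ * PauliX = PauliX * PauliY := by rw [hYt, neg_mul, ← hXY]

section Bonds

variable {N : ℕ}

/-- Abbreviation for the symmetry word. -/
noncomputable def Sw (N : ℕ) : Fin N → Matrix (Fin 2) (Fin 2) ℂ :=
  fun j => if j.val % 2 = 0 then PauliX else PauliY

lemma siteR_ne_siteL (j : Fin (N - 1)) : siteR j ≠ siteL j := by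
  simp [siteL, siteR, Fin.ext_iff]

lemma siteL_ne_siteR (j : Fin (N - 1)) : siteL j ≠ siteR j := (siteR_ne_siteL j).symm

lemma bondXX (j : Fin (N - 1)) :
    (twoOp (siteL j) (siteR j) PauliX PauliX)ᵀ * kronN (Sw N) +
      kronN (Sw N) * twoOp (siteL j) (siteR j) PauliX PauliX = 0 := by
  unfold twoOp
  by_cases hpar : j.val % 2 = 0
  · apply kron_anti _ _ (siteR j)
    · rw [if_neg (siteR_ne_siteL j), if_pos rfl]
      have : (Sw N) (siteR j) = PauliY := by
        simp only [Sw, siteR]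
        exact if_neg (by omega)
      rw [this, hXt]; exact hXY
    · intro m hm
      by_cases hL : m = siteL j
      · subst hL
        rw [if_pos rfl]
        have : (Sw N) (siteL j) = PauliX := by
          simp only [Sw, siteL]; exact if_pos hpar
        rw [this, hXt]
      · rw [if_neg hL, if_neg hm]; simp
  · apply kron_anti _ _ (siteL j)
    · rw [if_pos rfl]
      have : (Sw N) (siteL j) = PauliY := by
        simp only [Sw, siteL]; exact if_neg hpar
      rw [this, hXt]; exact hXY
    · intro m hm
      by_cases hR : m = siteR j
      · subst hR
        rw [if_neg (siteR_ne_siteL j), if_pos rfl]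
        have : (Sw N) (siteR j) = PauliX := by
          simp only [Sw, siteR]; exact if_pos (by omega)
        rw [this, hXt]
      · rw [if_neg hm, if_neg hR]; simp
  
lemma bondYY (j : Fin (N - 1)) :
    (twoOp (siteL j) (siteR j) PauliY PauliY)ᵀ * kronN (Sw N) +
      kronN (Sw N) * twoOp (siteL j) (siteR j) PauliY PauliY = 0 := by
  unfold twoOp
  by_cases hpar : j.val % 2 = 0
  · apply kron_anti _ _ (siteR j)
    · rw [if_neg (siteR_ne_siteL j), if_pos rfl]
      have : (Sw N) (siteR j) = PauliY := by
        simp only [Sw, siteR]; exact if_neg (by omega)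
      rw [this]; exact hYtY
    · intro m hm
      by_cases hL : m = siteL j
      · subst hL
        rw [if_pos rfl]
        have : (Sw N) (siteL j) = PauliX := by
          simp only [Sw, siteL]; exact if_pos hpar
        rw [this, hYtX, hXY]
      · rw [if_neg hL, if_neg hm]; simp
  · apply kron_anti _ _ (siteL j)
    · rw [if_pos rfl]
      have : (Sw N) (siteL j) = PauliY := by
        simp only [Sw, siteL]; exact if_neg hpar
      rw [this]; exact hYtY
    · intro m hm
      by_cases hR : m = siteR j
      · subst hR
        rw [if_neg (siteR_ne_siteL j), if_pos rfl]
        have : (Sw N) (siteR j) = PauliX := by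
          simp only [Sw, siteR]; exact if_pos (by omega)
        rw [this, hYtX, hXY]
      · rw [if_neg hm, if_neg hR]; simp

end Bonds

/-- The Pauli word `S = X_1 Y_2 X_3 Y_4 ⋯` (X on odd sites, Y on even sites, 1-indexed) is an
internal symmetry of the XX chain with controls `Z_1` and `X_2`. -/
theorem xx_internal_symmetry (N : ℕ) (hN : 2 ≤ N) (γ : Fin (N - 1) → ℝ) :
    let H₀ := xxChain N γ
    let H₁ : Matrix (Fin N → Fin 2) (Fin N → Fin 2) ℂ := localOp ⟨0, by omega⟩ PauliZ
    let H₂ : Matrix (Fin N → Fin 2) (Fin N → Fin 2) ℂ := localOp ⟨1, by omega⟩ PauliX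
    let S : Matrix (Fin N → Fin 2) (Fin N → Fin 2) ℂ :=
      kronN (fun j => if j.val % 2 = 0 then PauliX else PauliY)
    H₀ᵀ * S + S * H₀ = 0 ∧ H₁ᵀ * S + S * H₁ = 0 ∧ H₂ᵀ * S + S * H₂ = 0 := by
  intro H₀ H₁ H₂ S
  have hS : S = kronN (Sw N) := rfl
  refine ⟨?_, ?_, ?_⟩
  · show (xxChain N γ)ᵀ * S + S * xxChain N γ = 0
    rw [hS]
    simp only [xxChain, Matrix.transpose_sum, Matrix.transpose_smul, Matrix.transpose_add,
      Finset.sum_mul, Matrix.smul_mul, Matrix.mul_sum, Matrix.mul_smul, add_mul, mul_add]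
    rw [← Finset.sum_add_distrib]
    apply Finset.sum_eq_zero
    intro j _
    rw [← smul_add]
    have h : ((twoOp (siteL j) (siteR j) PauliX PauliX)ᵀ * kronN (Sw N) +
          (twoOp (siteL j) (siteR j) PauliY PauliY)ᵀ * kronN (Sw N)) +
        (kronN (Sw N) * twoOp (siteL j) (siteR j) PauliX PauliX +
          kronN (Sw N) * twoOp (siteL j) (siteR j) PauliY PauliY) = 0 := by
      rw [add_add_add_comm, bondXX, bondYY, add_zero]
    rw [h, smul_zero]
  · show (localOp ⟨0, by omega⟩ PauliZ)ᵀ * S + S * localOp ⟨0, by omega⟩ PauliZ = 0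
    rw [hS]
    unfold localOp
    apply kron_anti _ _ ⟨0, by omega⟩
    · rw [if_pos rfl]
      have : (Sw N) ⟨0, by omega⟩ = PauliX := by simp [Sw]
      rw [this]; exact hZX
    · intro m hm
      rw [if_neg hm]; simp
  · show (localOp ⟨1, by omega⟩ PauliX)ᵀ * S + S * localOp ⟨1, by omega⟩ PauliX = 0
    rw [hS]
    unfold localOp
    apply kron_anti _ _ ⟨1, by omega⟩
    · rw [if_pos rfl]
      have : (Sw N) ⟨1, by omega⟩ = PauliY := by simp [Sw]
      rw [this, hXt]; exact hXY
    · intro m hm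
      rw [if_neg hm]; simp
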